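/- Fix δ ∈ (0,1) and let N be a standard normal random variable. Then E[ | (1 − t^{−δ})^{−1/2} · exp( − N² t^{1−δ} / (2 (t − t^{1−δ})) ) − 1 | ] → 0 as t → ∞. (Equivalently: the Radon–Nikodym density (1 − t^{−δ})^{−1/2} e^{−W_{t^{1−δ}}²/(2(t − t^{1−δ}))} of the law of a Brownian bridge on [0,t] restricted to [0, t^{1−δ}] with respect to that of a Brownian motion on [0, t^{1−δ}] converges to 1 in L¹ as t → ∞, where W is a standard Brownian motion.) -/

import Mathlib

open MeasureTheory ProbabilityTheory Filter Real

/-- for `δ ∈ (0,1)` and a standard normal `N`,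
`E[ |(1 − t^{−δ})^{−1/2} exp(−N² t^{1−δ}/(2(t − t^{1−δ}))) − 1| ] → 0` as `t → ∞`;
i.e. the Radon–Nikodym density of the Brownian bridge on `[0,t]` restricted to `[0,t^{1−δ}]`
with respect to Brownian motion converges to `1` in `L¹`. -/
theorem bridge_density_tendsto_one {Ω : Type*} [MeasurableSpace Ω]
    (P : Measure Ω) [IsProbabilityMeasure P]
    (δ : ℝ) (hδ : δ ∈ Set.Ioo (0:ℝ) 1)
    (N : Ω → ℝ) (hN : P.map N = gaussianReal 0 1) :
    Tendsto (fun t : ℝ => ∫ ω,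
        |(1 - t ^ (-δ)) ^ (-(1:ℝ) / 2) *
            Real.exp (-(N ω) ^ 2 * t ^ (1 - δ) / (2 * (t - t ^ (1 - δ)))) - 1| ∂P)
      atTop (nhds 0) := by
  obtain ⟨hδ0, hδ1⟩ := hδ
  have hNm : AEMeasurable N P := by
    by_contra h
    have h0 : P.map N = 0 := Measure.map_of_not_aemeasurable h
    rw [hN] at h0
    exact (IsProbabilityMeasure.ne_zero (gaussianReal 0 1)) h0
  have key := MeasureTheory.tendsto_integral_filter_of_dominated_convergence
    (μ := P) (l := atTop)
    (F := fun (t : ℝ) ω => |(1 - t ^ (-δ)) ^ (-(1:ℝ) / 2) *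
            Real.exp (-(N ω) ^ 2 * t ^ (1 - δ) / (2 * (t - t ^ (1 - δ)))) - 1|)
    (f := fun _ => (0:ℝ)) (bound := fun _ => (3:ℝ))
    (by
      -- measurability
      filter_upwards with t
      have h1 : AEMeasurable (fun ω => -(N ω) ^ 2 * t ^ (1 - δ) / (2 * (t - t ^ (1 - δ)))) P :=
        ((hNm.pow_const 2).neg.mul_const _).div_const _
      have h2 : AEMeasurable
          (fun ω => Real.exp (-(N ω) ^ 2 * t ^ (1 - δ) / (2 * (t - t ^ (1 - δ))))) P :=
        Real.measurable_exp.comp_aemeasurable h1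
      exact (_root_.continuous_abs.measurable.comp_aemeasurable
        ((aemeasurable_const.mul h2).sub aemeasurable_const)).aestronglyMeasurable)
    (by
      -- bound
      have hev : ∀ᶠ t : ℝ in atTop, (2:ℝ) ≤ t ^ δ ∧ (2:ℝ) ≤ t :=
        ((tendsto_rpow_atTop hδ0).eventually_ge_atTop 2).and (eventually_ge_atTop 2)
      filter_upwards [hev] with t ⟨htδ, ht2⟩
      have ht0 : (0:ℝ) < t := by linarith
      have ht1 : (1:ℝ) < t := by linarith
      refine Filter.Eventually.of_forall fun ω => ?_
      have hpow0 : (0:ℝ) < t ^ (-δ) := Real.rpow_pos_of_pos ht0 _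
      have hpow : t ^ (-δ) ≤ 1/2 := by
        rw [Real.rpow_neg ht0.le]
        rw [show (1:ℝ)/2 = (2:ℝ)⁻¹ by norm_num]
        exact inv_anti₀ (by norm_num) htδ
      have hbase : (1:ℝ)/2 ≤ 1 - t ^ (-δ) := by linarith
      have hb0 : (0:ℝ) < 1 - t ^ (-δ) := by linarith
      have hc2 : (1 - t ^ (-δ)) ^ (-(1:ℝ)/2) ≤ 2 := by
        rw [show (-(1:ℝ)/2) = -((1:ℝ)/2) by ring, Real.rpow_neg hb0.le]
        have h1 : (1/2:ℝ) ≤ (1 - t ^ (-δ)) ^ ((1:ℝ)/2) := by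
          calc (1/2:ℝ) = (1/2:ℝ) ^ (1:ℝ) := by rw [Real.rpow_one]
          _ ≤ (1/2:ℝ) ^ ((1:ℝ)/2) :=
            Real.rpow_le_rpow_of_exponent_ge (by norm_num) (by norm_num) (by norm_num)
          _ ≤ (1 - t ^ (-δ)) ^ ((1:ℝ)/2) :=
            Real.rpow_le_rpow (by norm_num) hbase (by norm_num)
        calc ((1 - t ^ (-δ)) ^ ((1:ℝ)/2))⁻¹ ≤ (1/2:ℝ)⁻¹ :=
              inv_anti₀ (by norm_num) h1
        _ = 2 := by norm_num
      have hc0 : (0:ℝ) ≤ (1 - t ^ (-δ)) ^ (-(1:ℝ)/2) := Real.rpow_nonneg hb0.le _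
      have htlt : t ^ (1 - δ) < t := by
        nth_rewrite 2 [show t = t ^ (1:ℝ) by rw [Real.rpow_one]]
        exact Real.rpow_lt_rpow_of_exponent_lt ht1 (by linarith)
      have hden : (0:ℝ) < 2 * (t - t ^ (1 - δ)) := by linarith
      have hexp1 : Real.exp (-(N ω) ^ 2 * t ^ (1 - δ) / (2 * (t - t ^ (1 - δ)))) ≤ 1 := by
        rw [Real.exp_le_one_iff]
        apply div_nonpos_of_nonpos_of_nonneg _ hden.le
        have : (0:ℝ) ≤ (N ω) ^ 2 * t ^ (1 - δ) :=
          mul_nonneg (sq_nonneg _) (Real.rpow_nonneg ht0.le _)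
        nlinarith
      have hexp0 : (0:ℝ) ≤ Real.exp (-(N ω) ^ 2 * t ^ (1 - δ) / (2 * (t - t ^ (1 - δ)))) :=
        (Real.exp_pos _).le
      have hprod : (1 - t ^ (-δ)) ^ (-(1:ℝ)/2) *
          Real.exp (-(N ω) ^ 2 * t ^ (1 - δ) / (2 * (t - t ^ (1 - δ)))) ≤ 2 := by
        calc _ ≤ 2 * 1 := mul_le_mul hc2 hexp1 hexp0 (by norm_num)
        _ = 2 := by ring
      have hprod0 : (0:ℝ) ≤ (1 - t ^ (-δ)) ^ (-(1:ℝ)/2) *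
          Real.exp (-(N ω) ^ 2 * t ^ (1 - δ) / (2 * (t - t ^ (1 - δ)))) :=
        mul_nonneg hc0 hexp0
      rw [Real.norm_eq_abs, abs_abs]
      rw [abs_le]
      constructor <;> [linarith; linarith])
    (integrable_const _)
    (by
      -- pointwise limit
      refine Filter.Eventually.of_forall fun ω => ?_
      have h1 : Tendsto (fun t : ℝ => (1 - t ^ (-δ)) ^ (-(1:ℝ)/2)) atTop (nhds 1) := by
        have hb : Tendsto (fun t : ℝ => 1 - t ^ (-δ)) atTop (nhds 1) := by
          have := (tendsto_const_nhds (x := (1:ℝ)) (f := atTop)).sub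
            (tendsto_rpow_neg_atTop hδ0)
          simpa using this
        have := hb.rpow_const (p := -(1:ℝ)/2) (Or.inl one_ne_zero)
        simpa using this
      have h2 : Tendsto (fun t : ℝ =>
          -(N ω) ^ 2 * t ^ (1 - δ) / (2 * (t - t ^ (1 - δ)))) atTop (nhds 0) := by
        have hdd : Tendsto (fun t : ℝ => 2 * (t ^ δ - 1)) atTop atTop := by
          apply Tendsto.const_mul_atTop (by norm_num : (0:ℝ) < 2)
          have := tendsto_atTop_add_const_right atTop (-1 : ℝ) (tendsto_rpow_atTop hδ0)
          simpa [sub_eq_add_neg] using this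
        have hmain : Tendsto (fun t : ℝ => -(N ω) ^ 2 / (2 * (t ^ δ - 1))) atTop (nhds 0) :=
          tendsto_const_nhds.div_atTop hdd
        apply hmain.congr'
        filter_upwards [eventually_gt_atTop (1:ℝ)] with t ht1
        have ht0 : (0:ℝ) < t := by linarith
        have hne : t ^ (1 - δ) ≠ 0 := (Real.rpow_pos_of_pos ht0 _).ne'
        have hsplit : t - t ^ (1 - δ) = t ^ (1 - δ) * (t ^ δ - 1) := by
          have : t ^ (1 - δ) * t ^ δ = t := by
            rw [← Real.rpow_add ht0]; norm_num
          ring_nf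
          nlinarith [this]
        rw [hsplit, show (2:ℝ) * (t ^ (1 - δ) * (t ^ δ - 1)) =
          t ^ (1 - δ) * (2 * (t ^ δ - 1)) by ring,
          show -(N ω) ^ 2 * t ^ (1 - δ) = t ^ (1 - δ) * (-(N ω) ^ 2) by ring,
          mul_div_mul_left _ _ hne]
      have hexp : Tendsto (fun t : ℝ =>
          Real.exp (-(N ω) ^ 2 * t ^ (1 - δ) / (2 * (t - t ^ (1 - δ))))) atTop (nhds 1) := by
        have := (Real.continuous_exp.tendsto 0).comp h2
        simpa [Function.comp_def] using this
      have := ((h1.mul hexp).sub_const 1).abs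
      simpa using this)
  simpa using key
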